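/- arXiv:2103.02736 — 3 statements merged into one kernel-verified Lean document; each statement's English description precedes it below -/
import Mathlib

section
/- If f_i: ℝ_{≥0}^N → ℝ are quasi-positive (f_i(u)=... ≥ 0 whenever u ≥ 0 and u_i = 0), continuously differentiable, satisfy the total mass dissipation condition ∑_i f_i(u) ≤ 0 for all u ≥ 0, and satisfy ∂f_i/∂u_i(u) ≥ -C(1+|u|) for all u ≥ 0 and all i, then there is a constant C' such that ∑_i f_i(u) log u_i ≤ C'(1+|u|²) for all u with strictly positive entries. -/
lemma stmt0_abs_le {N : ℕ} (u : EuclideanSpace ℝ (Fin N)) (i : Fin N) : |u i| ≤ ‖u‖ := by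
  rw [EuclideanSpace.norm_eq u, show |u i| = Real.sqrt ((u i)^2) from (Real.sqrt_sq_eq_abs _).symm]
  apply Real.sqrt_le_sqrt
  simp only [Real.norm_eq_abs, sq_abs]
  exact Finset.single_le_sum (fun j _ => sq_nonneg (u j)) (Finset.mem_univ i)

lemma stmt0_key {N : ℕ} {g : EuclideanSpace ℝ (Fin N) → ℝ} {C : ℝ} (hC : 0 < C)
    (hreg : ContDiff ℝ 1 g) (i : Fin N)
    (hqp : ∀ u : EuclideanSpace ℝ (Fin N), (∀ j, 0 ≤ u j) → u i = 0 → 0 ≤ g u)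
    (hder : ∀ u : EuclideanSpace ℝ (Fin N), (∀ j, 0 ≤ u j) →
      -C * (1 + ‖u‖) ≤ fderiv ℝ g u (EuclideanSpace.single i 1))
    (u : EuclideanSpace ℝ (Fin N)) (hu : ∀ j, 0 ≤ u j) :
    -(C * (1 + ‖u‖)) * u i ≤ g u := by
  set e : EuclideanSpace ℝ (Fin N) := EuclideanSpace.single i 1 with he
  set v : EuclideanSpace ℝ (Fin N) := WithLp.toLp 2 (Function.update u i 0) with hv
  set φ : ℝ → EuclideanSpace ℝ (Fin N) := fun t => v + t • e with hφ
  have hφj : ∀ t j, φ t j = if j = i then t else u j := by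
    intro t j
    simp only [hφ, hv, he, PiLp.add_apply, PiLp.smul_apply, EuclideanSpace.single_apply,
      Function.update, smul_eq_mul]
    by_cases h : j = i <;> simp [h]
  have hφd : ∀ t, HasDerivAt φ e t := by
    intro t
    have : HasDerivAt (fun t : ℝ => t • e) ((1:ℝ) • e) t := (hasDerivAt_id t).smul_const e
    exact (by simpa using this : HasDerivAt (fun t : ℝ => t • e) e t).const_add v
  have hgd : ∀ t, HasDerivAt (fun t => g (φ t)) (fderiv ℝ g (φ t) e) t := fun t =>
    ((hreg.differentiable one_ne_zero (φ t)).hasFDerivAt).comp_hasDerivAt t (hφd t)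
  have hφnn : ∀ t, 0 ≤ t → ∀ j, 0 ≤ φ t j := by
    intro t ht j; rw [hφj]; by_cases h : j = i <;> simp [h, ht, hu j]
  have hφnorm : ∀ t, 0 ≤ t → t ≤ u i → ‖φ t‖ ≤ ‖u‖ := by
    intro t ht0 ht1
    rw [EuclideanSpace.norm_eq, EuclideanSpace.norm_eq]
    apply Real.sqrt_le_sqrt
    apply Finset.sum_le_sum
    intro j _
    simp only [Real.norm_eq_abs, sq_abs, hφj]
    by_cases h : j = i
    · subst h; simp only [if_pos]
      exact pow_le_pow_left₀ ht0 ht1 2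
    · simp [h]
  set K : ℝ := C * (1 + ‖u‖) with hK
  have hKnn : 0 ≤ K := by
    have : (0:ℝ) ≤ 1 + ‖u‖ := by positivity
    positivity
  set h : ℝ → ℝ := fun t => g (φ t) + K * t with hh
  have hhd : ∀ t, HasDerivAt h (fderiv ℝ g (φ t) e + K) t := by
    intro t
    have h2 : HasDerivAt (fun t : ℝ => K * t) K t := by
      simpa using (hasDerivAt_id t).const_mul K
    exact (hgd t).add h2
  have hmono : MonotoneOn h (Set.Icc 0 (u i)) := by
    apply monotoneOn_of_deriv_nonneg (convex_Icc _ _)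
    · intro x _
      exact ((hhd x).differentiableAt).continuousAt.continuousWithinAt
    · intro x _; exact ((hhd x).differentiableAt).differentiableWithinAt
    · intro x hx
      rw [interior_Icc] at hx
      rw [(hhd x).deriv]
      have h1 : -C * (1 + ‖φ x‖) ≤ fderiv ℝ g (φ x) e := hder (φ x) (hφnn x hx.1.le)
      have h2 : ‖φ x‖ ≤ ‖u‖ := hφnorm x hx.1.le hx.2.le
      have h3 : -K ≤ -C * (1 + ‖φ x‖) := by
        rw [hK]
        nlinarith [norm_nonneg (φ x)]
      linarith
  have hmem0 : (0:ℝ) ∈ Set.Icc 0 (u i) := ⟨le_refl _, hu i⟩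
  have hmem1 : u i ∈ Set.Icc 0 (u i) := ⟨hu i, le_refl _⟩
  have := hmono hmem0 hmem1 (hu i)
  have hφ0 : φ 0 = v := by simp [hφ]
  have hφu : φ (u i) = u := by
    ext j
    rw [hφj]
    by_cases h : j = i
    · subst h; simp
    · simp [h]
  have hg0 : 0 ≤ g (φ 0) := by
    rw [hφ0]
    apply hqp v
    · intro j
      simp only [hv, Function.update]
      by_cases h : j = i <;> simp [h, hu j]
    · simp [hv]
  rw [hh] at this
  simp only [hφu, mul_zero, add_zero] at this
  nlinarith

theorem stmt0 (N : ℕ) (f : Fin N → EuclideanSpace ℝ (Fin N) → ℝ) (C : ℝ) (hC : 0 < C)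
    (hreg : ∀ i, ContDiff ℝ 1 (f i))
    (hqp : ∀ i, ∀ u : EuclideanSpace ℝ (Fin N), (∀ j, 0 ≤ u j) → u i = 0 → 0 ≤ f i u)
    (hmd : ∀ u : EuclideanSpace ℝ (Fin N), (∀ j, 0 ≤ u j) → ∑ i, f i u ≤ 0)
    (hder : ∀ i, ∀ u : EuclideanSpace ℝ (Fin N), (∀ j, 0 ≤ u j) →
      -C * (1 + ‖u‖) ≤ fderiv ℝ (f i) u (EuclideanSpace.single i 1)) :
    ∃ C' : ℝ, 0 < C' ∧ ∀ u : EuclideanSpace ℝ (Fin N), (∀ j, 0 < u j) →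
      ∑ i, f i u * Real.log (u i) ≤ C' * (1 + ‖u‖ ^ 2) := by
  refine ⟨2 * N * C + 1, by positivity, ?_⟩
  intro u hu
  have hu' : ∀ j, 0 ≤ u j := fun j => (hu j).le
  set M : ℝ := 1 + ‖u‖ with hM
  have hM1 : (1:ℝ) ≤ M := by have := norm_nonneg u; linarith
  have hM0 : (0:ℝ) < M := by linarith
  have hlogM : 0 ≤ Real.log M := Real.log_nonneg hM1
  have huiM : ∀ i, u i < M := fun i => by
    have h1 : u i ≤ |u i| := le_abs_self _
    have := stmt0_abs_le u i
    linarith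
  set K : ℝ := C * M with hK
  have hKnn : 0 ≤ K := by positivity
  have hkey : ∀ i, -K * u i ≤ f i u := fun i =>
    stmt0_key hC (hreg i) i (hqp i) (hder i) u hu'
  -- termwise bound
  have hterm : ∀ i, f i u * (Real.log (u i) - Real.log M) ≤ K * M := by
    intro i
    have hlogle : Real.log (u i) - Real.log M ≤ 0 := by
      have := Real.log_le_log (hu i) (huiM i).le
      linarith
    have h1 : f i u * (Real.log (u i) - Real.log M) ≤
        (-K * u i) * (Real.log (u i) - Real.log M) :=
      mul_le_mul_of_nonpos_right (hkey i) hlogle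
    have h2 : (-K * u i) * (Real.log (u i) - Real.log M) = K * (u i * Real.log (M / u i)) := by
      rw [Real.log_div (ne_of_gt hM0) (ne_of_gt (hu i))]
      ring
    have h3 : u i * Real.log (M / u i) ≤ M := by
      have hd : (0:ℝ) < M / u i := div_pos hM0 (hu i)
      have := Real.log_le_sub_one_of_pos hd
      have h4 : u i * Real.log (M / u i) ≤ u i * (M / u i - 1) :=
        mul_le_mul_of_nonneg_left this (hu i).le
      have hne : u i ≠ 0 := (hu i).ne'
      have h5 : u i * (M / u i - 1) = M - u i := by
        field_simp
      nlinarith [hu i]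
    calc f i u * (Real.log (u i) - Real.log M) ≤ K * (u i * Real.log (M / u i)) := by
          rw [← h2]; exact h1
      _ ≤ K * M := mul_le_mul_of_nonneg_left h3 hKnn
  have hsum : ∑ i, f i u * Real.log (u i) ≤
      ∑ i, f i u * (Real.log (u i) - Real.log M) := by
    have : ∑ i, f i u * (Real.log (u i) - Real.log M) =
        (∑ i, f i u * Real.log (u i)) - Real.log M * ∑ i, f i u := by
      rw [Finset.mul_sum, ← Finset.sum_sub_distrib]
      congr 1; funext i; ring
    rw [this]
    have := mul_nonpos_of_nonneg_of_nonpos hlogM (hmd u hu')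
    linarith
  have hsum2 : ∑ i, f i u * (Real.log (u i) - Real.log M) ≤ N * (K * M) := by
    calc ∑ i, f i u * (Real.log (u i) - Real.log M) ≤ ∑ _i : Fin N, K * M :=
          Finset.sum_le_sum (fun i _ => hterm i)
      _ = N * (K * M) := by simp [mul_comm]
  have hfinal : (N:ℝ) * (K * M) ≤ (2 * N * C + 1) * (1 + ‖u‖ ^ 2) := by
    rw [hK, hM]
    have hN : (0:ℝ) ≤ N := Nat.cast_nonneg N
    nlinarith [norm_nonneg u, sq_nonneg (1 - ‖u‖), mul_nonneg (mul_nonneg hN hC.le) (sq_nonneg (1 - ‖u‖))]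
  linarith
end

section
/- If f_i: ℝ_{≥0}^N → ℝ are quasi-positive, continuously differentiable, satisfy ∑_i f_i(u) ≤ 0 for all u ≥ 0, and satisfy ∂f_i/∂u_i(u) ≥ -C(1+|u|²) for all u ≥ 0 and all i, then there is a constant C' with ∑_i f_i(u) log u_i ≤ C'(1+|u|³) for all u with strictly positive entries. -/
set_option maxHeartbeats 1000000

lemma my_norm_le {N : ℕ} (v u : EuclideanSpace ℝ (Fin N)) (h : ∀ j, |v j| ≤ |u j|) :
    ‖v‖ ≤ ‖u‖ := by
  rw [EuclideanSpace.norm_eq, EuclideanSpace.norm_eq]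
  apply Real.sqrt_le_sqrt
  apply Finset.sum_le_sum
  intro j _
  have := h j
  simp only [Real.norm_eq_abs]
  exact pow_le_pow_left₀ (abs_nonneg _) this 2

lemma my_key (N : ℕ) (f : Fin N → EuclideanSpace ℝ (Fin N) → ℝ) (C : ℝ) (hC : 0 < C)
    (hreg : ∀ i, ContDiff ℝ 1 (f i))
    (hqp : ∀ i, ∀ u : EuclideanSpace ℝ (Fin N), (∀ j, 0 ≤ u j) → u i = 0 → 0 ≤ f i u)
    (hder : ∀ i, ∀ u : EuclideanSpace ℝ (Fin N), (∀ j, 0 ≤ u j) →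
      -C * (1 + ‖u‖ ^ 2) ≤ fderiv ℝ (f i) u (EuclideanSpace.single i 1))
    (i : Fin N) (u : EuclideanSpace ℝ (Fin N)) (hu : ∀ j, 0 ≤ u j) :
    -(C * (1 + ‖u‖ ^ 2) * u i) ≤ f i u := by
  set K : ℝ := C * (1 + ‖u‖ ^ 2) with hKdef
  have hK : 0 < K := by positivity
  set s : EuclideanSpace ℝ (Fin N) := EuclideanSpace.single i (1:ℝ) with hsdef
  set v : EuclideanSpace ℝ (Fin N) := u - (u i) • s with hvdef
  have hcoord : ∀ t : ℝ, ∀ j, (v + t • s) j = if j = i then t else u j := by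
    intro t j
    have : (v + t • s) j = u j - u i * s j + t * s j := rfl
    rw [this, hsdef, EuclideanSpace.single_apply]
    by_cases h : j = i
    · subst h; simp
    · simp [h]
  set ψ : ℝ → EuclideanSpace ℝ (Fin N) := fun t => v + t • s with hψdef
  have hψd : ∀ t : ℝ, HasDerivAt ψ s t := by
    intro t
    have h := ((hasDerivAt_id t).smul_const s).const_add v
    rw [one_smul] at h
    exact h
  have hψcoord : ∀ t j, ψ t j = if j = i then t else u j := hcoord
  have hψnn : ∀ t ∈ Set.Icc (0:ℝ) (u i), ∀ j, 0 ≤ ψ t j := by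
    intro t ht j
    rw [hψcoord]
    by_cases h : j = i <;> simp [h, ht.1, hu j]
  have hψnorm : ∀ t ∈ Set.Icc (0:ℝ) (u i), ‖ψ t‖ ≤ ‖u‖ := by
    intro t ht
    apply my_norm_le
    intro j
    rw [hψcoord]
    by_cases h : j = i
    · subst h
      rw [if_pos rfl, abs_of_nonneg ht.1, abs_of_nonneg (hu j)]
      exact ht.2
    · simp [h]
  have hψu : ψ (u i) = u := by
    refine PiLp.ext fun j => ?_
    rw [hψcoord]
    by_cases h : j = i
    · subst h; simp
    · simp [h]
  set φ : ℝ → ℝ := fun t => f i (ψ t) with hφdef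
  have hφd : ∀ t : ℝ, HasDerivAt φ (fderiv ℝ (f i) (ψ t) s) t := by
    intro t
    exact HasFDerivAt.comp_hasDerivAt t
      (((hreg i).differentiable one_ne_zero (ψ t)).hasFDerivAt) (hψd t)
  -- h t = φ t + K t is monotone on [0, u i]
  set g : ℝ → ℝ := fun t => φ t + K * t with hgdef
  have hgd : ∀ t : ℝ, HasDerivAt g (fderiv ℝ (f i) (ψ t) s + K) t := by
    intro t
    exact (hφd t).add (by simpa using (hasDerivAt_id t).const_mul K)
  have hmono : MonotoneOn g (Set.Icc 0 (u i)) := by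
    apply monotoneOn_of_deriv_nonneg (convex_Icc _ _)
    · have hψc : Continuous ψ := continuous_const.add (continuous_id.smul continuous_const)
      have hφc : Continuous φ := ((hreg i).continuous).comp hψc
      exact (hφc.add (continuous_const.mul continuous_id)).continuousOn
    · intro t _
      exact ((hgd t).differentiableAt).differentiableWithinAt
    · intro t ht
      rw [interior_Icc] at ht
      rw [(hgd t).deriv]
      have h1 : -C * (1 + ‖ψ t‖ ^ 2) ≤ fderiv ℝ (f i) (ψ t) s :=
        hder i (ψ t) (hψnn t (Set.mem_Icc_of_Ioo ht))
      have h2 : ‖ψ t‖ ≤ ‖u‖ := hψnorm t (Set.mem_Icc_of_Ioo ht)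
      have h3 : ‖ψ t‖ ^ 2 ≤ ‖u‖ ^ 2 := pow_le_pow_left₀ (norm_nonneg _) h2 2
      nlinarith
  have h0mem : (0:ℝ) ∈ Set.Icc (0:ℝ) (u i) := by constructor <;> simp [hu i]
  have h1mem : (u i) ∈ Set.Icc (0:ℝ) (u i) := by constructor <;> simp [hu i]
  have hg0 : g 0 ≤ g (u i) := hmono h0mem h1mem (hu i)
  have hv0 : 0 ≤ φ 0 := by
    apply hqp i (ψ 0) (hψnn 0 h0mem)
    rw [hψcoord]; simp
  have : φ (u i) = f i u := congrArg (f i) hψu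
  rw [hgdef] at hg0
  simp only at hg0
  nlinarith

theorem stmt1 (N : ℕ) (f : Fin N → EuclideanSpace ℝ (Fin N) → ℝ) (C : ℝ) (hC : 0 < C)
    (hreg : ∀ i, ContDiff ℝ 1 (f i))
    (hqp : ∀ i, ∀ u : EuclideanSpace ℝ (Fin N), (∀ j, 0 ≤ u j) → u i = 0 → 0 ≤ f i u)
    (hmd : ∀ u : EuclideanSpace ℝ (Fin N), (∀ j, 0 ≤ u j) → ∑ i, f i u ≤ 0)
    (hder : ∀ i, ∀ u : EuclideanSpace ℝ (Fin N), (∀ j, 0 ≤ u j) →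
      -C * (1 + ‖u‖ ^ 2) ≤ fderiv ℝ (f i) u (EuclideanSpace.single i 1)) :
    ∃ C' : ℝ, 0 < C' ∧ ∀ u : EuclideanSpace ℝ (Fin N), (∀ j, 0 < u j) →
      ∑ i, f i u * Real.log (u i) ≤ C' * (1 + ‖u‖ ^ 3) := by
  refine ⟨2 * (N + 1) * C, by positivity, ?_⟩
  intro u hu
  have hu' : ∀ j, 0 ≤ u j := fun j => (hu j).le
  set a : ℝ := Real.log (1 + ‖u‖) with hadef
  have hnorm : (0:ℝ) ≤ ‖u‖ := norm_nonneg u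
  have ha0 : 0 ≤ a := Real.log_nonneg (by linarith)
  have hexp : Real.exp a = 1 + ‖u‖ := Real.exp_log (by linarith)
  set K : ℝ := C * (1 + ‖u‖ ^ 2) with hKdef
  have hK : 0 < K := by positivity
  have hle : ∀ i, u i ≤ ‖u‖ := by
    intro i
    have hsq : u i ^ 2 ≤ ‖u‖ ^ 2 := by
      rw [EuclideanSpace.norm_eq, Real.sq_sqrt (by positivity)]
      calc u i ^ 2 = ‖u i‖ ^ 2 := by rw [Real.norm_eq_abs, sq_abs]
        _ ≤ ∑ j, ‖u j‖ ^ 2 := Finset.single_le_sum (f := fun j => ‖u j‖ ^ 2) (fun j _ => sq_nonneg _) (Finset.mem_univ i)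
    nlinarith [(hu i).le]
  have hterm : ∀ i, f i u * (Real.log (u i) - a) ≤ K * (1 + ‖u‖) := by
    intro i
    have h1 : Real.log (u i) ≤ a := Real.log_le_log (hu i) (by linarith [hle i])
    have h2 : -(K * u i) ≤ f i u := my_key N f C hC hreg hqp hder i u hu'
    have h3 : f i u * (Real.log (u i) - a) ≤ (-(K * u i)) * (Real.log (u i) - a) :=
      mul_le_mul_of_nonpos_right h2 (by linarith)
    have h4 : u i * (a - Real.log (u i)) ≤ 1 + ‖u‖ := by
      have hlog : Real.log ((1 + ‖u‖) / u i) ≤ (1 + ‖u‖) / u i - 1 :=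
        Real.log_le_sub_one_of_pos (div_pos (by linarith) (hu i))
      rw [Real.log_div (by positivity) (ne_of_gt (hu i))] at hlog
      have hui : 0 < u i := hu i
      have hmul : u i * (Real.log (1 + ‖u‖) - Real.log (u i)) ≤ u i * ((1 + ‖u‖) / u i - 1) :=
        mul_le_mul_of_nonneg_left hlog hui.le
      have heq : u i * ((1 + ‖u‖) / u i - 1) = (1 + ‖u‖) - u i := by field_simp
      rw [heq] at hmul
      rw [hadef]
      nlinarith
    nlinarith
  have hsum1 : ∑ i, f i u * Real.log (u i)
      = ∑ i, f i u * (Real.log (u i) - a) + (∑ i, f i u) * a := by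
    rw [Finset.sum_mul, ← Finset.sum_add_distrib]
    apply Finset.sum_congr rfl
    intro i _
    ring
  have hsum2 : (∑ i, f i u) * a ≤ 0 := mul_nonpos_of_nonpos_of_nonneg (hmd u hu') ha0
  have hsum3 : ∑ i, f i u * (Real.log (u i) - a) ≤ N * (K * (1 + ‖u‖)) := by
    calc ∑ i, f i u * (Real.log (u i) - a) ≤ ∑ _i : Fin N, K * (1 + ‖u‖) :=
          Finset.sum_le_sum (fun i _ => hterm i)
      _ = N * (K * (1 + ‖u‖)) := by simp [Finset.sum_const, nsmul_eq_mul]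
  have hN : (0:ℝ) ≤ N := Nat.cast_nonneg N
  rw [hsum1]
  have hfin : (N:ℝ) * (K * (1 + ‖u‖)) ≤ 2 * (N + 1) * C * (1 + ‖u‖ ^ 3) := by
    rw [hKdef]
    nlinarith [sq_nonneg (‖u‖ - 1), mul_nonneg hN hnorm, sq_nonneg ‖u‖,
      mul_nonneg (mul_nonneg hN hnorm) (sq_nonneg (‖u‖ - 1)),
      mul_nonneg hC.le (mul_nonneg hN (mul_nonneg hnorm (sq_nonneg (‖u‖ - 1)))),
      mul_nonneg hC.le (sq_nonneg (‖u‖ - 1))]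
  linarith
end

section
/- Let a_{11}, a_{12}, a_{21}, a_{22} ≥ 0. The inequality {(a_{12}+a_{21})² − 16(a_{12}a_{21} + 4 a_{11}a_{22})} X ≥ 32 (a_{11}a_{21} X² + a_{22}a_{12}) holds for all X > 0 (after dividing by u_1 u_2, with X = u_1/u_2) if and only if a_{11}a_{21} = a_{22}a_{12} = 0 and (a_{12}+a_{21})² ≥ 16(a_{12}a_{21} + 4 a_{11}a_{22}). -/
theorem stmt4 (a11 a12 a21 a22 : ℝ) (h11 : 0 ≤ a11) (h12 : 0 ≤ a12) (h21 : 0 ≤ a21)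
    (h22 : 0 ≤ a22) :
    (∀ X : ℝ, 0 < X →
        ((a12 + a21) ^ 2 - 16 * (a12 * a21 + 4 * a11 * a22)) * X ≥
          32 * (a11 * a21 * X ^ 2 + a22 * a12)) ↔
      (a11 * a21 = 0 ∧ a22 * a12 = 0 ∧
        (a12 + a21) ^ 2 ≥ 16 * (a12 * a21 + 4 * a11 * a22)) := by
  set C := (a12 + a21) ^ 2 - 16 * (a12 * a21 + 4 * a11 * a22) with hC
  have hb0 : 0 ≤ a22 * a12 := mul_nonneg h22 h12
  have ha0 : 0 ≤ a11 * a21 := mul_nonneg h11 h21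
  constructor
  · intro h
    have ha : a11 * a21 = 0 := by
      by_contra hne
      have hpos : 0 < a11 * a21 := lt_of_le_of_ne ha0 (Ne.symm hne)
      set Y := (|C| + 1) / (32 * (a11 * a21)) with hY
      have hYpos : 0 < Y := by positivity
      have hX := h Y hYpos
      have key : 32 * (a11 * a21) * Y = |C| + 1 := by
        rw [hY]; field_simp; exact div_self hne
      nlinarith [le_abs_self C, mul_pos hYpos hYpos, hX]
    have h1 := h 1 one_pos
    have hCpos : 32 * (a11 * a21) + 32 * (a22 * a12) ≤ C := by nlinarith
    have hb : a22 * a12 = 0 := by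
      by_contra hne
      have hbpos : 0 < a22 * a12 := lt_of_le_of_ne hb0 (Ne.symm hne)
      have hCp : 0 < C := by nlinarith
      set Y := 16 * (a22 * a12) / C with hY
      have hYpos : 0 < Y := by positivity
      have hX := h Y hYpos
      have key : C * Y = 16 * (a22 * a12) := by
        rw [hY]; field_simp
      nlinarith [mul_pos hYpos hYpos, hX, mul_nonneg ha0 (le_of_lt (mul_pos hYpos hYpos))]
    refine ⟨ha, hb, by nlinarith⟩
  · rintro ⟨ha, hb, hCge⟩
    intro X hX
    have : 32 * (a11 * a21 * X ^ 2 + a22 * a12) = 0 := by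
      rw [ha, hb]; ring
    rw [this]
    have : 0 ≤ C := by nlinarith
    positivity
end
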